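/- For every n ≥ 1, the number of Dyck n-paths whose terminal descent has odd length equals the number of early-hill-free Dyck n-paths (paths with no UDU occurrence starting at ground level). -/
import Mathlib


inductive Step : Type
  | U : Step
  | D : Step
deriving DecidableEq

open Step

/-- The path stays weakly above ground level: every prefix has at least as many `U`s as `D`s. -/
def NonnegPrefixes (p : List Step) : Prop :=
  ∀ q : List Step, q <+: p → q.count D ≤ q.count U

/-- A Dyck path: equally many upsteps and downsteps, never dipping below ground level. -/
def IsDyck (p : List Step) : Prop :=
  p.count U = p.count D ∧ NonnegPrefixes p

/-- A Dyck `n`-path: a Dyck path with `n` upsteps (semilength `n`). -/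
def IsDyckN (n : ℕ) (p : List Step) : Prop :=
  IsDyck p ∧ p.count U = n

/-- Length of the terminal descent (maximal final run of downsteps). -/
def termDesc (p : List Step) : ℕ :=
  (p.reverse.takeWhile (fun s => s == D)).length

/-- Number of returns: downsteps that bring the path back to ground level. -/
def returnCount (p : List Step) : ℕ :=
  ((List.range p.length).filter
    (fun i => (p.take (i+1)).count U == (p.take (i+1)).count D)).length

/-- `GroundDescent p q m r` : `p = q ++ D^m ++ r` is a maximal run of `m ≥ 1` downsteps
ending at ground level. -/
def GroundDescent (p q : List Step) (m : ℕ) (r : List Step) : Prop :=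
  p = q ++ List.replicate m D ++ r ∧ 1 ≤ m ∧
  q.getLast? ≠ some D ∧ r.head? ≠ some D ∧
  q.count U = q.count D + m

/-- All descents to ground level other than the terminal one have odd length. -/
def OddNonterminalGroundDescents (p : List Step) : Prop :=
  ∀ q m r, GroundDescent p q m r → r ≠ [] → Odd m

/-- No occurrence of `UD` starting at ground level. -/
def HillFree (p : List Step) : Prop :=
  ∀ q r : List Step, p = q ++ [U, D] ++ r → q.count U ≠ q.count D

/-- No occurrence of `UDU` starting at ground level. -/
def EarlyHillFree (p : List Step) : Prop :=
  ∀ q r : List Step, p = q ++ [U, D, U] ++ r → q.count U ≠ q.count D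

/-- Number of early hills: occurrences of `UDU` starting at ground level. -/
def earlyHillCount (p : List Step) : ℕ :=
  ((List.range p.length).filter
    (fun i => decide ((p.take i).count U = (p.take i).count D ∧
      (p.drop i).take 3 = [U, D, U]))).length

instance : Fintype Step :=
  ⟨{Step.U, Step.D}, fun s => by cases s <;> simp⟩

-- basic lemmas
lemma step_cases (s : Step) : s = U ∨ s = D := by cases s <;> simp

lemma count_add_len (p : List Step) : p.count U + p.count D = p.length := by
  induction p with
  | nil => simp
  | cons h t ih => cases h <;> simp [List.count_cons] <;> omega

lemma dyckN_zero {p : List Step} (h : IsDyckN 0 p) : p = [] := by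
  have h1 := h.1.1
  have h2 := h.2
  have := count_add_len p
  have : p.length = 0 := by omega
  exact List.length_eq_zero_iff.mp this

lemma dyck_nil : IsDyck ([] : List Step) := by
  constructor
  · simp
  · intro q hq; simp [List.prefix_nil.mp hq]

lemma dyck_head {p : List Step} (h : IsDyck p) (hne : p ≠ []) :
    ∃ t, p = U :: t := by
  obtain ⟨s, t, rfl⟩ := List.exists_cons_of_ne_nil hne
  cases s with
  | U => exact ⟨t, rfl⟩
  | D =>
    have := h.2 [D] ⟨t, rfl⟩
    simp at this

lemma dyck_mem_U {p : List Step} (h : IsDyck p) (hne : p ≠ []) : U ∈ p := by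
  have h1 := h.1
  have := count_add_len p
  have hl : p.length ≠ 0 := by simpa using hne
  have : p.count U ≠ 0 := by omega
  exact List.count_pos_iff.mp (Nat.pos_of_ne_zero this)

lemma prefix_take_lt {t s : List Step} (hs : s <+: t) : s = t.take s.length :=
  List.prefix_iff_eq_take.mp hs

lemma decomp_exists {p : List Step} (h : IsDyck p) (hne : p ≠ []) :
    ∃ r q, IsDyck r ∧ IsDyck q ∧ p = U :: (r ++ D :: q) := by
  obtain ⟨t, rfl⟩ := dyck_head h hne
  have hcnt : t.count U + 1 = t.count D := by
    have := h.1; simp [List.count_cons] at this; omega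
  have hpre : ∀ s : List Step, s <+: t → s.count D ≤ s.count U + 1 := by
    intro s hs
    have := h.2 (U :: s) (by obtain ⟨w, hw⟩ := hs; exact ⟨w, by simp [← hw]⟩)
    simp [List.count_cons] at this; omega
  set Q : ℕ → Prop := fun i => (t.take i).count D = (t.take i).count U + 1 with hQdef
  have hQex : ∃ i, Q i := ⟨t.length, by simp [hQdef]; omega⟩
  classical
  set i := Nat.find hQex with hidef
  have hQi : Q i := Nat.find_spec hQex
  have hmin : ∀ j, j < i → ¬ Q j := fun j hj => Nat.find_min hQex hj
  have hle : i ≤ t.length := Nat.find_le (by simp [hQdef]; omega)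
  have hclaim : ∀ j, j < i → (t.take j).count D ≤ (t.take j).count U := by
    intro j hj
    induction j with
    | zero => simp
    | succ j ih =>
      have ih' := ih (Nat.lt_of_succ_lt hj)
      have hne' : ¬ ((t.take (j+1)).count D = (t.take (j+1)).count U + 1) :=
        hmin (j+1) hj
      rw [List.take_succ] at hne' ⊢
      have h1 : (t[j]?.toList.count U) + (t[j]?.toList.count D) ≤ 1 := by
        have := count_add_len (t[j]?.toList)
        have : t[j]?.toList.length ≤ 1 := by cases t[j]? <;> simp
        omega
      simp only [List.count_append, hQdef] at hne' ⊢
      omega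
  have hi1 : 1 ≤ i := by
    rcases Nat.eq_zero_or_pos i with h0 | h0
    · exfalso; have := hQi; rw [h0] at this; simp [hQdef] at this
    · exact h0
  have hj0 : i - 1 < i := by omega
  have hd0 := hclaim (i-1) hj0
  have hgetsome : ∃ s, t[i-1]? = some s := by
    have : i - 1 < t.length := by omega
    exact ⟨t[i-1], List.getElem?_eq_getElem this⟩
  obtain ⟨s, hs⟩ := hgetsome
  have htake : t.take i = t.take (i-1) ++ s :: [] := by
    have : i = (i-1) + 1 := by omega
    rw [this, List.take_succ, hs]; rfl
  have hsD : s = D := by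
    rcases step_cases s with rfl | rfl
    · exfalso
      have : (t.take i).count D = (t.take i).count U + 1 := hQi
      rw [htake] at this
      simp [List.count_append, List.count_cons] at this
      omega
    · rfl
  subst hsD
  refine ⟨t.take (i-1), t.drop i, ?_, ?_, ?_⟩
  · constructor
    · have : (t.take i).count D = (t.take i).count U + 1 := hQi
      rw [htake] at this
      simp [List.count_append] at this
      omega
    · intro s hs'
      have hslen : s.length ≤ i - 1 := by
        have := hs'.length_le
        simp at this
        omega
      have hst : s <+: t := hs'.trans (List.take_prefix _ _)
      have : s = t.take s.length := prefix_take_lt hst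
      rw [this]
      exact hclaim _ (by omega)
  · constructor
    · -- counts of drop
      have h1 : (t.take i).count U + (t.drop i).count U = t.count U := by
        rw [← List.count_append, List.take_append_drop]
      have h2 : (t.take i).count D + (t.drop i).count D = t.count D := by
        rw [← List.count_append, List.take_append_drop]
      have h3 : (t.take i).count D = (t.take i).count U + 1 := hQi
      omega
    · intro s hs'
      obtain ⟨w, hw⟩ := hs'
      have hpref : U :: (t.take i ++ s) <+: U :: t := by
        refine ⟨w, ?_⟩
        simp only [List.cons_append, List.cons.injEq, true_and]
        rw [List.append_assoc, hw, List.take_append_drop]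
      have := h.2 _ hpref
      have h3 : (t.take i).count D = (t.take i).count U + 1 := hQi
      simp [List.count_cons, List.count_append] at this
      omega
  · conv_lhs => rw [← List.take_append_drop i t]
    rw [htake]
    simp

lemma prefix_split {s a b : List Step} (h : s <+: a ++ b) :
    s <+: a ∨ ∃ s', s = a ++ s' ∧ s' <+: b := by
  rcases Nat.le_total s.length a.length with hl | hl
  · exact Or.inl (List.prefix_of_prefix_length_le h (List.prefix_append a b) hl)
  · right
    have ha : a <+: s := List.prefix_of_prefix_length_le (List.prefix_append a b) h hl
    obtain ⟨s', rfl⟩ := ha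
    exact ⟨s', rfl, (List.prefix_append_right_inj a).mp h⟩

lemma dyck_compose {r q : List Step} (hr : IsDyck r) (hq : IsDyck q) :
    IsDyck (U :: (r ++ D :: q)) := by
  constructor
  · simp [List.count_cons, List.count_append, hr.1, hq.1]
    omega
  · intro s hs
    rcases List.eq_nil_or_concat s with rfl | _
    · simp
    · obtain ⟨hd, s', rfl⟩ : ∃ hd s', s = hd :: s' := by
        rcases s with _ | ⟨hd, s'⟩
        · simp_all
        · exact ⟨hd, s', rfl⟩
      rw [List.cons_prefix_cons] at hs
      obtain ⟨rfl, hs⟩ := hs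
      rcases prefix_split hs with h1 | ⟨s'', rfl, h2⟩
      · have := hr.2 s' h1
        simp [List.count_cons]; omega
      · rcases List.eq_nil_or_concat s'' with rfl | _
        · have := hr.1
          simp [List.count_cons, List.count_append]; omega
        · obtain ⟨hd2, s3, rfl⟩ : ∃ hd2 s3, s'' = hd2 :: s3 := by
            rcases s'' with _ | ⟨hd2, s3⟩
            · simp_all
            · exact ⟨hd2, s3, rfl⟩
          rw [List.cons_prefix_cons] at h2
          obtain ⟨rfl, h2⟩ := h2
          have := hq.2 s3 h2
          have := hr.1
          simp [List.count_cons, List.count_append]; omega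

lemma dyck_compose_count {r q : List Step} :
    (U :: (r ++ D :: q)).count U = r.count U + q.count U + 1 ∧
    (U :: (r ++ D :: q)).count D = r.count D + q.count D + 1 := by
  constructor <;> simp [List.count_cons, List.count_append] <;> omega

-- uniqueness of decomposition
lemma decomp_unique {r₁ q₁ r₂ q₂ : List Step} (hr₁ : IsDyck r₁) (hr₂ : IsDyck r₂)
    (h : r₁ ++ D :: q₁ = r₂ ++ D :: q₂) : r₁ = r₂ ∧ q₁ = q₂ := by
  have hlen : r₁.length = r₂.length := by
    by_contra hne
    rcases Nat.lt_or_ge r₁.length r₂.length with hl | hl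
    · have h1 : r₁ ++ [D] <+: r₂ := by
        apply List.prefix_of_prefix_length_le (l₃ := r₂ ++ D :: q₂)
        · rw [← h]; exact ⟨q₁, by simp⟩
        · exact List.prefix_append _ _
        · simp; omega
      have h2 := hr₂.2 _ h1
      have h3 := hr₁.1
      simp [List.count_append] at h2
      omega
    · have hl' : r₂.length < r₁.length := by omega
      have h1 : r₂ ++ [D] <+: r₁ := by
        apply List.prefix_of_prefix_length_le (l₃ := r₁ ++ D :: q₁)
        · rw [h]; exact ⟨q₂, by simp⟩
        · exact List.prefix_append _ _
        · simp; omega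
      have h2 := hr₁.2 _ h1
      have h3 := hr₂.1
      simp [List.count_append] at h2
      omega
  obtain ⟨h1, h2⟩ := List.append_inj h hlen
  exact ⟨h1, by simpa using h2⟩

lemma ground_prefix {r q a : List Step} (hr : IsDyck r)
    (ha : a <+: U :: (r ++ D :: q)) (hcnt : a.count U = a.count D) :
    a = [] ∨ ∃ a', a = U :: (r ++ D :: a') ∧ a' <+: q ∧ a'.count U = a'.count D := by
  rcases a with _ | ⟨h, a₂⟩
  · exact Or.inl rfl
  · right
    rw [List.cons_prefix_cons] at ha
    obtain ⟨rfl, ha⟩ := ha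
    have hcnt₂ : a₂.count D = a₂.count U + 1 := by
      simp [List.count_cons] at hcnt; omega
    rcases prefix_split ha with h1 | ⟨s, rfl, h2⟩
    · exact absurd (hr.2 _ h1) (by omega)
    · rcases s with _ | ⟨h2hd, a'⟩
      · exfalso
        have := hr.1
        simp [List.count_append] at hcnt₂
        omega
      · rw [List.cons_prefix_cons] at h2
        obtain ⟨rfl, h2⟩ := h2
        refine ⟨a', rfl, h2, ?_⟩
        have := hr.1
        simp [List.count_append, List.count_cons] at hcnt₂
        omega

lemma takeWhile_append_mem {l l' : List Step} (h : U ∈ l) :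
    (l ++ l').takeWhile (fun s => s == D) = l.takeWhile (fun s => s == D) := by
  induction l with
  | nil => simp at h
  | cons x t ih =>
    rcases step_cases x with rfl | rfl
    · simp [List.takeWhile_cons]
    · have : U ∈ t := by simpa using h
      simp [List.takeWhile_cons, ih this]

lemma termDesc_append {x q : List Step} (hq : IsDyck q) (hne : q ≠ []) :
    termDesc (x ++ q) = termDesc q := by
  unfold termDesc
  rw [List.reverse_append]
  rw [takeWhile_append_mem (List.mem_reverse.mpr (dyck_mem_U hq hne))]

lemma termDesc_close {r : List Step} (hr : IsDyck r) :
    termDesc (U :: (r ++ D :: [])) = termDesc r + 1 := by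
  unfold termDesc
  have hrev : (U :: (r ++ D :: [])).reverse = D :: (r.reverse ++ [U]) := by simp
  rw [hrev]
  rw [List.takeWhile_cons]
  simp only [show (D == D) = true from rfl, if_true]
  rcases List.eq_nil_or_concat r with rfl | hne
  · simp
  · have hne' : r ≠ [] := by rcases hne with ⟨_, _, rfl⟩; simp
    rw [takeWhile_append_mem (List.mem_reverse.mpr (dyck_mem_U hr hne'))]
    simp

lemma ehf_close {r : List Step} (hr : IsDyck r) :
    EarlyHillFree (U :: (r ++ D :: [])) := by
  intro a b hab hcnt
  have ha : a <+: U :: (r ++ D :: []) := ⟨[U, D, U] ++ b, by rw [hab]; simp⟩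
  rcases ground_prefix hr ha hcnt with rfl | ⟨a', rfl, ha', _⟩
  · -- U :: (r ++ [D]) = [U,D,U] ++ b
    exfalso
    have h2 : r ++ [D] = D :: U :: b := by simpa using hab
    rcases List.eq_nil_or_concat r with rfl | hc
    · simp at h2
    · have hne' : r ≠ [] := by rcases hc with ⟨_, _, rfl⟩; simp
      obtain ⟨t, rfl⟩ := dyck_head hr hne'
      simp at h2
  · -- a' <+: [] so a' = []
    rw [List.prefix_nil] at ha'
    subst ha'
    -- U :: (r ++ [D]) = U :: (r ++ [D]) ++ [U,D,U] ++ b : length contradiction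
    have := congrArg List.length hab
    simp at this

lemma ehf_iff {r q : List Step} (hr : IsDyck r) (hq : IsDyck q) (hqne : q ≠ []) :
    EarlyHillFree (U :: (r ++ D :: q)) ↔ (r ≠ [] ∧ EarlyHillFree q) := by
  constructor
  · intro h
    constructor
    · rintro rfl
      obtain ⟨q', rfl⟩ := dyck_head hq hqne
      exact h [] q' (by simp) (by simp)
    · intro a b hab hcnt
      exact h (U :: (r ++ D :: a)) b
        (by rw [hab]; simp)
        (by have := hr.1; simp [List.count_cons, List.count_append]; omega)
  · rintro ⟨hrne, hehf⟩ a b hab hcnt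
    have ha : a <+: U :: (r ++ D :: q) := ⟨[U, D, U] ++ b, by rw [hab]; simp⟩
    rcases ground_prefix hr ha hcnt with rfl | ⟨a', rfl, ha', hcnt'⟩
    · -- U :: (r ++ D :: q) = [U,D,U] ++ b, so r starts with D or is empty
      simp at hab
      obtain ⟨t, rfl⟩ := dyck_head hr hrne
      simp at hab
    · -- cancel to get q = a' ++ [U,D,U] ++ b
      have hq' : q = a' ++ [U, D, U] ++ b := by
        have := hab
        simp only [List.cons_append, List.cons.injEq, List.append_assoc] at this
        obtain ⟨_, h2⟩ := this
        have := List.append_cancel_left h2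
        injection this with _ h3
        simpa using h3
      exact hehf a' b (by simpa using hq') hcnt'

-- counting layer
lemma finite_dyck_subtype (n : ℕ) (Q : List Step → Prop)
    (hQ : ∀ p, Q p → IsDyckN n p) : Finite {p : List Step // Q p} := by
  have hsub : {p : List Step | Q p} ⊆ {l : List Step | l.length = 2 * n} := by
    intro p hp
    have h := hQ p hp
    have h1 := h.1.1
    have h2 := h.2
    have h3 := count_add_len p
    simp only [Set.mem_setOf_eq]
    omega
  exact ((List.finite_length_eq Step (2 * n)).subset hsub).to_subtype

lemma finite_pair (k m : ℕ) (C : List Step × List Step → Prop) :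
    Finite {rq : List Step × List Step //
      (IsDyckN k rq.1 ∧ IsDyckN m rq.2) ∧ C rq} := by
  have f1 : Finite {r : List Step // IsDyckN k r} :=
    finite_dyck_subtype k _ (fun _ h => h)
  have f2 : Finite {q : List Step // IsDyckN m q} :=
    finite_dyck_subtype m _ (fun _ h => h)
  apply Finite.of_injective (f := fun x =>
    ((⟨x.1.1, x.2.1.1⟩ : {r : List Step // IsDyckN k r}),
     (⟨x.1.2, x.2.1.2⟩ : {q : List Step // IsDyckN m q})))
  intro a b hab
  simp only [Prod.mk.injEq, Subtype.mk.injEq] at hab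
  exact Subtype.ext (Prod.ext hab.1 hab.2)

lemma nat_card_sigma {n : ℕ} (f : Fin n → Type) [∀ i, Finite (f i)] :
    Nat.card (Σ i, f i) = ∑ i, Nat.card (f i) := by
  have : ∀ i, Fintype (f i) := fun i => Fintype.ofFinite (f i)
  simp only [Nat.card_eq_fintype_card]
  exact Fintype.card_sigma

lemma dyckN_ne_nil {n : ℕ} {p : List Step} (h : IsDyckN n p) (hn : 1 ≤ n) :
    p ≠ [] := by
  rintro rfl
  have := h.2
  simp at this
  omega

lemma card_decomp (n : ℕ) (hn : 1 ≤ n) (P : List Step → Prop) :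
    Nat.card {p : List Step // IsDyckN n p ∧ P p} =
    ∑ k ∈ Finset.range n, Nat.card {rq : List Step × List Step //
      (IsDyckN k rq.1 ∧ IsDyckN (n-1-k) rq.2) ∧ P (U :: (rq.1 ++ D :: rq.2))} := by
  classical
  set f : Fin n → Type := fun k => {rq : List Step × List Step //
      (IsDyckN k rq.1 ∧ IsDyckN (n-1-k) rq.2) ∧ P (U :: (rq.1 ++ D :: rq.2))} with hf
  have : ∀ k : Fin n, Finite (f k) := fun k => finite_pair _ _ _
  have hg : ∀ (k : Fin n) (x : f k), IsDyckN n (U :: (x.1.1 ++ D :: x.1.2)) := by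
    rintro k ⟨⟨r, q⟩, ⟨⟨hr, hq⟩, _⟩⟩
    refine ⟨dyck_compose hr.1 hq.1, ?_⟩
    have h1 := (dyck_compose_count (r := r) (q := q)).1
    have h2 := hr.2
    have h3 := hq.2
    have h4 := k.isLt
    simp only at h2 h3
    rw [h1]
    omega
  set g : (Σ k : Fin n, f k) → {p : List Step // IsDyckN n p ∧ P p} :=
    fun x => ⟨U :: (x.2.1.1 ++ D :: x.2.1.2), hg x.1 x.2, x.2.2.2⟩ with hgdef
  have hbij : Function.Bijective g := by
    constructor
    · rintro ⟨k₁, ⟨⟨r₁, q₁⟩, h₁⟩⟩ ⟨k₂, ⟨⟨r₂, q₂⟩, h₂⟩⟩ heq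
      simp only [hgdef, Subtype.mk.injEq, List.cons.injEq, true_and] at heq
      obtain ⟨hr, hq⟩ := decomp_unique h₁.1.1.1 h₂.1.1.1 heq
      subst hr; subst hq
      have hk : k₁ = k₂ := by
        apply Fin.ext
        have e1 := h₁.1.1.2
        have e2 := h₂.1.1.2
        rw [← e1, ← e2]
      subst hk
      rfl
    · rintro ⟨p, hp, hP⟩
      obtain ⟨r, q, hr, hq, hpe⟩ := decomp_exists hp.1 (dyckN_ne_nil hp hn)
      have hck := (dyck_compose_count (r := r) (q := q))
      have hcnt : r.count U + q.count U + 1 = n := by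
        have := hp.2
        rw [hpe] at this
        omega
      have hk : r.count U < n := by omega
      refine ⟨⟨⟨r.count U, hk⟩, ⟨(r, q), ⟨⟨⟨hr, rfl⟩, ⟨hq, by simp; omega⟩⟩, ?_⟩⟩⟩, ?_⟩
      · rw [← hpe]; exact hP
      · exact Subtype.ext hpe.symm
  calc Nat.card {p : List Step // IsDyckN n p ∧ P p}
      = Nat.card (Σ k : Fin n, f k) := (Nat.card_congr (Equiv.ofBijective g hbij)).symm
    _ = ∑ k : Fin n, Nat.card (f k) := nat_card_sigma f
    _ = ∑ k ∈ Finset.range n, Nat.card {rq : List Step × List Step //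
      (IsDyckN k rq.1 ∧ IsDyckN (n-1-k) rq.2) ∧ P (U :: (rq.1 ++ D :: rq.2))} := by
        rw [Finset.sum_range fun k => Nat.card {rq : List Step × List Step //
          (IsDyckN k rq.1 ∧ IsDyckN (n-1-k) rq.2) ∧ P (U :: (rq.1 ++ D :: rq.2))}]

noncomputable def aD (n : ℕ) : ℕ :=
  Nat.card {p : List Step // IsDyckN n p ∧ Odd (termDesc p)}
noncomputable def bD (n : ℕ) : ℕ :=
  Nat.card {p : List Step // IsDyckN n p ∧ EarlyHillFree p}
noncomputable def cD (n : ℕ) : ℕ :=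
  Nat.card {p : List Step // IsDyckN n p}
noncomputable def eD (n : ℕ) : ℕ :=
  Nat.card {p : List Step // IsDyckN n p ∧ ¬ Odd (termDesc p)}

lemma cD_zero : cD 0 = 1 := by
  have : Unique {p : List Step // IsDyckN 0 p} :=
    { default := ⟨[], dyck_nil, rfl⟩
      uniq := fun x => Subtype.ext (dyckN_zero x.2) }
  exact Nat.card_unique

lemma eD_zero : eD 0 = 1 := by
  have : Unique {p : List Step // IsDyckN 0 p ∧ ¬ Odd (termDesc p)} :=
    { default := ⟨[], ⟨dyck_nil, rfl⟩, by simp [termDesc]⟩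
      uniq := fun x => Subtype.ext (dyckN_zero x.2.1) }
  exact Nat.card_unique

lemma card_partition (Q R : List Step → Prop) [Finite {p : List Step // Q p}] :
    Nat.card {p : List Step // Q p} =
    Nat.card {p : List Step // Q p ∧ R p} + Nat.card {p : List Step // Q p ∧ ¬ R p} := by
  classical
  have f1 : Finite {p : List Step // Q p ∧ R p} :=
    Finite.of_injective (fun x => (⟨x.1, x.2.1⟩ : {p : List Step // Q p}))
      (fun a b hab => Subtype.ext (by simpa [Subtype.ext_iff] using hab))
  have f2 : Finite {p : List Step // Q p ∧ ¬ R p} :=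
    Finite.of_injective (fun x => (⟨x.1, x.2.1⟩ : {p : List Step // Q p}))
      (fun a b hab => Subtype.ext (by simpa [Subtype.ext_iff] using hab))
  rw [← Nat.card_sum]
  exact Nat.card_congr
    ((Equiv.sumCompl (fun x : {p : List Step // Q p} => R x.1)).symm.trans
      (Equiv.sumCongr (Equiv.subtypeSubtypeEquivSubtypeInter Q R)
        (Equiv.subtypeSubtypeEquivSubtypeInter Q (fun p => ¬ R p))))

lemma c_eq_a_add_e (n : ℕ) : cD n = aD n + eD n := by
  have : Finite {p : List Step // IsDyckN n p} := finite_dyck_subtype n _ (fun _ h => h)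
  exact card_partition (IsDyckN n) (fun p => Odd (termDesc p))

lemma card_pair_left (k m : ℕ) (A : List Step → Prop) :
    Nat.card {rq : List Step × List Step //
      (IsDyckN k rq.1 ∧ IsDyckN m rq.2) ∧ (A rq.1 ∧ True)} =
    Nat.card {r : List Step // IsDyckN k r ∧ A r} *
    Nat.card {q : List Step // IsDyckN m q} := by
  rw [← Nat.card_prod]
  exact Nat.card_congr ((Equiv.subtypeEquivRight (q := fun rq =>
      (IsDyckN k rq.1 ∧ A rq.1) ∧ IsDyckN m rq.2) (fun rq => by tauto)).trans
    (Equiv.subtypeProdEquivProd (p := fun r => IsDyckN k r ∧ A r) (q := IsDyckN m)))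

lemma card_pair_right (k m : ℕ) (B : List Step → Prop) :
    Nat.card {rq : List Step × List Step //
      (IsDyckN k rq.1 ∧ IsDyckN m rq.2) ∧ (True ∧ B rq.2)} =
    Nat.card {r : List Step // IsDyckN k r} *
    Nat.card {q : List Step // IsDyckN m q ∧ B q} := by
  rw [← Nat.card_prod]
  exact Nat.card_congr ((Equiv.subtypeEquivRight (q := fun rq =>
      IsDyckN k rq.1 ∧ (IsDyckN m rq.2 ∧ B rq.2)) (fun rq => by tauto)).trans
    (Equiv.subtypeProdEquivProd (p := IsDyckN k) (q := fun q => IsDyckN m q ∧ B q)))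

lemma card_true (k : ℕ) :
    Nat.card {p : List Step // IsDyckN k p ∧ True} = cD k :=
  Nat.card_congr (Equiv.subtypeEquivRight (fun p => by simp))

lemma card_dyck0 (B : List Step → Prop) (hB : B ([] : List Step)) :
    Nat.card {q : List Step // IsDyckN 0 q ∧ B q} = 1 := by
  have : Unique {q : List Step // IsDyckN 0 q ∧ B q} :=
    { default := ⟨[], ⟨dyck_nil, rfl⟩, hB⟩
      uniq := fun x => Subtype.ext (dyckN_zero x.2.1) }
  exact Nat.card_unique

lemma termDesc_decomp {r q : List Step} (hq : IsDyck q) (hqne : q ≠ []) :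
    termDesc (U :: (r ++ D :: q)) = termDesc q := by
  have h : U :: (r ++ D :: q) = (U :: (r ++ [D])) ++ q := by simp
  rw [h, termDesc_append hq hqne]

lemma aD_rec (m : ℕ) :
    aD (m+1) = (∑ k ∈ Finset.range m, cD k * aD (m-k)) + eD m := by
  have h := card_decomp (m+1) (by omega) (fun p => Odd (termDesc p))
  simp only [show m + 1 - 1 = m from rfl] at h
  rw [aD, h, Finset.sum_range_succ]
  congr 1
  · apply Finset.sum_congr rfl
    intro k hk
    have hkm : k < m := Finset.mem_range.mp hk
    have hiff : ∀ rq : List Step × List Step,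
        ((IsDyckN k rq.1 ∧ IsDyckN (m-k) rq.2) ∧ Odd (termDesc (U :: (rq.1 ++ D :: rq.2))))
        ↔ ((IsDyckN k rq.1 ∧ IsDyckN (m-k) rq.2) ∧ (True ∧ Odd (termDesc rq.2))) := by
      rintro ⟨r, q⟩
      constructor
      · rintro ⟨⟨h1, h2⟩, h3⟩
        have hqne : q ≠ [] := dyckN_ne_nil h2 (by omega)
        rw [termDesc_decomp h2.1 hqne] at h3
        exact ⟨⟨h1, h2⟩, trivial, h3⟩
      · rintro ⟨⟨h1, h2⟩, _, h3⟩
        have hqne : q ≠ [] := dyckN_ne_nil h2 (by omega)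
        rw [termDesc_decomp h2.1 hqne]
        exact ⟨⟨h1, h2⟩, h3⟩
    exact (Nat.card_congr (Equiv.subtypeEquivRight hiff)).trans
      (card_pair_right k (m-k) (fun q => Odd (termDesc q)))
  · -- k = m term
    have hsub : m - m = 0 := by omega
    rw [hsub]
    have hiff : ∀ rq : List Step × List Step,
        ((IsDyckN m rq.1 ∧ IsDyckN 0 rq.2) ∧ Odd (termDesc (U :: (rq.1 ++ D :: rq.2))))
        ↔ ((IsDyckN m rq.1 ∧ IsDyckN 0 rq.2) ∧ ((¬ Odd (termDesc rq.1)) ∧ True)) := by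
      rintro ⟨r, q⟩
      constructor
      · rintro ⟨⟨h1, h2⟩, h3⟩
        have hqnil : q = [] := dyckN_zero h2
        subst hqnil
        rw [termDesc_close h1.1] at h3
        refine ⟨⟨h1, h2⟩, ?_, trivial⟩
        rw [Nat.odd_iff] at h3 ⊢
        omega
      · rintro ⟨⟨h1, h2⟩, h3, _⟩
        have hqnil : q = [] := dyckN_zero h2
        subst hqnil
        rw [termDesc_close h1.1]
        refine ⟨⟨h1, h2⟩, ?_⟩
        rw [Nat.odd_iff] at h3 ⊢
        omega
    refine (Nat.card_congr (Equiv.subtypeEquivRight hiff)).trans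
      ((card_pair_left m 0 (fun r => ¬ Odd (termDesc r))).trans ?_)
    rw [show Nat.card {q : List Step // IsDyckN 0 q} = 1 from cD_zero, mul_one]
    rfl

lemma bD_rec (m : ℕ) :
    bD (m+1) = (∑ k ∈ Finset.range m, (if k = 0 then 0 else cD k * bD (m-k))) + cD m := by
  have h := card_decomp (m+1) (by omega) EarlyHillFree
  simp only [show m + 1 - 1 = m from rfl] at h
  rw [bD, h, Finset.sum_range_succ]
  congr 1
  · refine Finset.sum_congr rfl (fun k hk => ?_)
    have hkm : k < m := Finset.mem_range.mp hk
    by_cases hk0 : k = 0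
    · subst hk0
      simp only [if_pos rfl]
      have : IsEmpty {rq : List Step × List Step //
          (IsDyckN 0 rq.1 ∧ IsDyckN (m-0) rq.2) ∧ EarlyHillFree (U :: (rq.1 ++ D :: rq.2))} := by
        constructor
        rintro ⟨⟨r, q⟩, ⟨⟨h1, h2⟩, h3⟩⟩
        have hrnil : r = [] := dyckN_zero h1
        subst hrnil
        have hqne : q ≠ [] := dyckN_ne_nil h2 (by omega)
        exact ((ehf_iff dyck_nil h2.1 hqne).mp h3).1 rfl
      exact Nat.card_of_isEmpty
    · simp only [if_neg hk0]
      have hiff : ∀ rq : List Step × List Step,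
          ((IsDyckN k rq.1 ∧ IsDyckN (m-k) rq.2) ∧ EarlyHillFree (U :: (rq.1 ++ D :: rq.2)))
          ↔ ((IsDyckN k rq.1 ∧ IsDyckN (m-k) rq.2) ∧ (True ∧ EarlyHillFree rq.2)) := by
        rintro ⟨r, q⟩
        have hk1 : 1 ≤ k := by omega
        constructor
        · rintro ⟨⟨h1, h2⟩, h3⟩
          have hqne : q ≠ [] := dyckN_ne_nil h2 (by omega)
          exact ⟨⟨h1, h2⟩, trivial, ((ehf_iff h1.1 h2.1 hqne).mp h3).2⟩
        · rintro ⟨⟨h1, h2⟩, _, h3⟩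
          have hqne : q ≠ [] := dyckN_ne_nil h2 (by omega)
          have hrne : r ≠ [] := dyckN_ne_nil h1 hk1
          exact ⟨⟨h1, h2⟩, (ehf_iff h1.1 h2.1 hqne).mpr ⟨hrne, h3⟩⟩
      exact (Nat.card_congr (Equiv.subtypeEquivRight hiff)).trans
        (card_pair_right k (m-k) EarlyHillFree)
  · have hsub : m - m = 0 := by omega
    rw [hsub]
    have hiff : ∀ rq : List Step × List Step,
        ((IsDyckN m rq.1 ∧ IsDyckN 0 rq.2) ∧ EarlyHillFree (U :: (rq.1 ++ D :: rq.2)))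
        ↔ ((IsDyckN m rq.1 ∧ IsDyckN 0 rq.2) ∧ (True ∧ True)) := by
      rintro ⟨r, q⟩
      constructor
      · rintro ⟨⟨h1, h2⟩, _⟩
        exact ⟨⟨h1, h2⟩, trivial, trivial⟩
      · rintro ⟨⟨h1, h2⟩, _⟩
        have hqnil : q = [] := dyckN_zero h2
        subst hqnil
        exact ⟨⟨h1, h2⟩, ehf_close h1.1⟩
    refine (Nat.card_congr (Equiv.subtypeEquivRight hiff)).trans
      ((card_pair_left m 0 (fun _ => True)).trans ?_)
    rw [show Nat.card {q : List Step // IsDyckN 0 q} = 1 from cD_zero, mul_one,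
      card_true]

lemma key : ∀ n, 1 ≤ n → aD n = bD n := by
  intro n
  induction n using Nat.strong_induction_on with
  | _ n ih =>
    intro hn
    obtain ⟨m, rfl⟩ : ∃ m, n = m + 1 := ⟨n-1, by omega⟩
    rcases Nat.eq_zero_or_pos m with rfl | hm
    · rw [aD_rec, bD_rec]
      simp [eD_zero, cD_zero]
    · obtain ⟨m', rfl⟩ : ∃ m', m = m' + 1 := ⟨m-1, by omega⟩
      rw [aD_rec, bD_rec, Finset.sum_range_succ', Finset.sum_range_succ']
      have hsum : ∑ i ∈ Finset.range m', cD (i+1) * aD (m'+1-(i+1)) =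
          ∑ i ∈ Finset.range m', (if i+1 = 0 then 0 else cD (i+1) * bD (m'+1-(i+1))) := by
        refine Finset.sum_congr rfl (fun i hi => ?_)
        have him : i < m' := Finset.mem_range.mp hi
        rw [if_neg (by omega)]
        congr 1
        exact ih (m'+1-(i+1)) (by omega) (by omega)
      rw [hsum, c_eq_a_add_e (m'+1)]
      simp only [Nat.sub_zero, reduceIte, cD_zero, one_mul]
      omega


/-- For every `n ≥ 1`, Dyck `n`-paths with odd-length terminal descent are equinumerous
with early-hill-free Dyck `n`-paths. -/
theorem stmt3 (n : ℕ) (hn : 1 ≤ n) :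
    Nat.card {p : List Step // IsDyckN n p ∧ Odd (termDesc p)} =
    Nat.card {p : List Step // IsDyckN n p ∧ EarlyHillFree p} :=
  key n hn
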